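/- Let λ ∈ [-√2/2, √2/2], let V have df H_λ(u) = u(1+λ sin(log u)) on [0,1], let U be uniform on (0,1) independent of V, and let X = −V/U. Then the df F_λ of −V/U satisfies: F_λ(x) = |x|^{−1}(1/2 + λ/5) for x ≤ −1, and F_λ(x) = 1 − |x|(1/2 + (λ/5)(2 sin(log|x|) − cos(log|x|))) for −1 < x < 0. -/

import Mathlib

open MeasureTheory

noncomputable def Hfun (lam u : ℝ) : ℝ :=
  if u = 0 then 0 else u * (1 + lam * Real.sin (Real.log u))

open Real

lemma contHc (lam : ℝ) : Continuous fun t : ℝ => t * (1 + lam * Real.sin (Real.log t)) := by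
  rw [continuous_iff_continuousAt]
  intro x
  rcases eq_or_ne x 0 with rfl | hx
  · have h0 : (0:ℝ) * (1 + lam * Real.sin (Real.log 0)) = 0 := by ring
    unfold ContinuousAt
    simp only []
    rw [h0]
    apply squeeze_zero_norm (a := fun t : ℝ => (1 + |lam|) * |t|)
    · intro t
      have h1 : |Real.sin (Real.log t)| ≤ 1 := Real.abs_sin_le_one _
      have : |1 + lam * Real.sin (Real.log t)| ≤ 1 + |lam| := by
        calc |1 + lam * Real.sin (Real.log t)| ≤ |1| + |lam * Real.sin (Real.log t)| := abs_add_le _ _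
        _ ≤ 1 + |lam| := by
            rw [abs_one, abs_mul]
            have := mul_le_mul_of_nonneg_left h1 (abs_nonneg lam)
            linarith
      calc ‖t * (1 + lam * Real.sin (Real.log t))‖ = |t| * |1 + lam * Real.sin (Real.log t)| := abs_mul _ _
      _ ≤ |t| * (1 + |lam|) := by
          apply mul_le_mul_of_nonneg_left this (abs_nonneg t)
      _ = (1 + |lam|) * |t| := by ring
    · have : Filter.Tendsto (fun t : ℝ => (1 + |lam|) * |t|) (nhds 0) (nhds ((1 + |lam|) * |(0:ℝ)|)) := by
        exact (continuous_const.mul continuous_abs).tendsto 0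
      simpa using this
  · exact (continuousAt_id.mul (continuousAt_const.add (continuousAt_const.mul
      ((Real.continuous_sin.continuousAt).comp (Real.continuousAt_log hx)))))

lemma contG2 : Continuous fun t : ℝ => t^2 * (2 * Real.sin (Real.log t) - Real.cos (Real.log t)) := by
  rw [continuous_iff_continuousAt]
  intro x
  rcases eq_or_ne x 0 with rfl | hx
  · have h0 : (0:ℝ)^2 * (2 * Real.sin (Real.log 0) - Real.cos (Real.log 0)) = 0 := by ring
    unfold ContinuousAt
    simp only []
    rw [h0]
    apply squeeze_zero_norm (a := fun t : ℝ => 3 * t^2)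
    · intro t
      have h1 : |Real.sin (Real.log t)| ≤ 1 := Real.abs_sin_le_one _
      have h2 : |Real.cos (Real.log t)| ≤ 1 := Real.abs_cos_le_one _
      have hb : |2 * Real.sin (Real.log t) - Real.cos (Real.log t)| ≤ 3 := by
        calc |2 * Real.sin (Real.log t) - Real.cos (Real.log t)|
            ≤ |2 * Real.sin (Real.log t)| + |Real.cos (Real.log t)| := abs_sub _ _
        _ ≤ 3 := by rw [abs_mul]; simp only [abs_two]; linarith
      calc ‖t^2 * (2 * Real.sin (Real.log t) - Real.cos (Real.log t))‖
          = |t^2| * |2 * Real.sin (Real.log t) - Real.cos (Real.log t)| := abs_mul _ _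
      _ ≤ |t^2| * 3 := mul_le_mul_of_nonneg_left hb (abs_nonneg _)
      _ = 3 * t^2 := by rw [abs_of_nonneg (sq_nonneg t)]; ring
    · have : Filter.Tendsto (fun t : ℝ => 3 * t^2) (nhds 0) (nhds (3 * (0:ℝ)^2)) := by
        exact (continuous_const.mul (continuous_pow 2)).tendsto 0
      simpa using this
  · refine ContinuousAt.mul (continuousAt_pow _ _) ?_
    have hl := Real.continuousAt_log hx
    exact ((continuous_const.continuousAt.mul (Real.continuous_sin.continuousAt.comp hl)).sub
      (Real.continuous_cos.continuousAt.comp hl))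

lemma intHc (lam a : ℝ) (ha : 0 < a) :
    ∫ t in (0:ℝ)..a, t * (1 + lam * Real.sin (Real.log t))
      = a^2/2 + lam/5 * (a^2 * (2 * Real.sin (Real.log a) - Real.cos (Real.log a))) := by
  have key := intervalIntegral.integral_eq_sub_of_hasDerivAt_of_le (a := 0) (b := a)
    (f := fun t => t^2/2 + lam/5 * (t^2 * (2 * Real.sin (Real.log t) - Real.cos (Real.log t))))
    (f' := fun t => t * (1 + lam * Real.sin (Real.log t))) ha.le
    ?_ ?_ ((contHc lam).intervalIntegrable _ _)
  · rw [key]; simp [Real.log_zero]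
  · exact ((continuous_pow 2).div_const 2 |>.add (continuous_const.mul contG2)).continuousOn
  · intro t ht
    have ht0 : t ≠ 0 := ne_of_gt ht.1
    have hlog : HasDerivAt Real.log t⁻¹ t := Real.hasDerivAt_log ht0
    have hsin : HasDerivAt (fun u => Real.sin (Real.log u)) (Real.cos (Real.log t) * t⁻¹) t :=
      (Real.hasDerivAt_sin _).comp t hlog
    have hcos : HasDerivAt (fun u => Real.cos (Real.log u)) (-Real.sin (Real.log t) * t⁻¹) t :=
      (Real.hasDerivAt_cos _).comp t hlog
    have hsq : HasDerivAt (fun u : ℝ => u^2) (2 * t) t := by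
      simpa using (hasDerivAt_pow 2 t)
    have h1 : HasDerivAt (fun u => u^2 * (2 * Real.sin (Real.log u) - Real.cos (Real.log u)))
        (2 * t * (2 * Real.sin (Real.log t) - Real.cos (Real.log t))
          + t^2 * (2 * (Real.cos (Real.log t) * t⁻¹) - (-Real.sin (Real.log t) * t⁻¹))) t :=
      hsq.mul (((hsin.const_mul 2)).sub hcos)
    have h2 := (hsq.div_const 2).add (h1.const_mul (lam/5))
    convert h2 using 1
    · rfl
    have htt : t^2 * t⁻¹ = t := by rw [pow_two, mul_assoc, mul_inv_cancel₀ ht0, mul_one]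
    linear_combination (-lam/5 * (2 * Real.cos (Real.log t) + Real.sin (Real.log t))) * htt



lemma contMin (lam a : ℝ) : Continuous fun u : ℝ => (min (a*u) 1) * (1 + lam * Real.sin (Real.log (min (a*u) 1))) :=
  (contHc lam).comp ((continuous_const.mul continuous_id).min continuous_const)

lemma intCaseSmall (lam a : ℝ) (ha : 0 < a) (ha1 : a ≤ 1) :
    ∫ u in (0:ℝ)..1, (min (a*u) 1) * (1 + lam * Real.sin (Real.log (min (a*u) 1)))
      = a/2 + lam/5 * (a * (2 * Real.sin (Real.log a) - Real.cos (Real.log a))) := by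
  have hcongr : ∫ u in (0:ℝ)..1, (min (a*u) 1) * (1 + lam * Real.sin (Real.log (min (a*u) 1)))
      = ∫ u in (0:ℝ)..1, (a*u) * (1 + lam * Real.sin (Real.log (a*u))) := by
    apply intervalIntegral.integral_congr
    intro u hu
    rw [Set.uIcc_of_le (by norm_num : (0:ℝ) ≤ 1)] at hu
    have : a * u ≤ 1 := by nlinarith [hu.1, hu.2]
    simp only []
    rw [min_eq_left this]
  rw [hcongr, intervalIntegral.integral_comp_mul_left
    (fun t => t * (1 + lam * Real.sin (Real.log t))) (ne_of_gt ha)]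
  rw [mul_zero, mul_one, intHc lam a ha]
  field_simp
  have haa : a^2 * a⁻¹ = a := by rw [pow_two, mul_assoc, mul_inv_cancel₀ (ne_of_gt ha), mul_one]
  linear_combination (lam * Real.sin (Real.log a) * 4 - lam * Real.cos (Real.log a) * 2 + 5) * haa

lemma intCaseBig (lam a : ℝ) (ha : 1 ≤ a) :
    ∫ u in (0:ℝ)..1, (min (a*u) 1) * (1 + lam * Real.sin (Real.log (min (a*u) 1)))
      = a⁻¹ * (1/2 - lam/5) + (1 - a⁻¹) := by
  have ha0 : 0 < a := lt_of_lt_of_le one_pos ha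
  have hinv : 0 < a⁻¹ := inv_pos.mpr ha0
  have hinv1 : a⁻¹ ≤ 1 := inv_le_one_of_one_le₀ ha
  have hsplit := intervalIntegral.integral_add_adjacent_intervals (a := (0:ℝ)) (b := a⁻¹) (c := 1)
    (f := fun u => (min (a*u) 1) * (1 + lam * Real.sin (Real.log (min (a*u) 1))))
    ((contMin lam a).intervalIntegrable (μ := volume) 0 a⁻¹) ((contMin lam a).intervalIntegrable (μ := volume) a⁻¹ 1)
  rw [← hsplit]
  have h1 : ∫ u in (0:ℝ)..a⁻¹, (min (a*u) 1) * (1 + lam * Real.sin (Real.log (min (a*u) 1)))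
      = a⁻¹ * (1/2 - lam/5) := by
    have hcongr : ∫ u in (0:ℝ)..a⁻¹, (min (a*u) 1) * (1 + lam * Real.sin (Real.log (min (a*u) 1)))
        = ∫ u in (0:ℝ)..a⁻¹, (a*u) * (1 + lam * Real.sin (Real.log (a*u))) := by
      apply intervalIntegral.integral_congr
      intro u hu
      rw [Set.uIcc_of_le hinv.le] at hu
      have : a * u ≤ 1 := by
        have := hu.2
        calc a * u ≤ a * a⁻¹ := by nlinarith [hu.1]
        _ = 1 := mul_inv_cancel₀ (ne_of_gt ha0)
      simp only []
      rw [min_eq_left this]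
    rw [hcongr, intervalIntegral.integral_comp_mul_left
      (fun t => t * (1 + lam * Real.sin (Real.log t))) (ne_of_gt ha0)]
    rw [mul_zero, mul_inv_cancel₀ (ne_of_gt ha0), intHc lam 1 one_pos]
    simp only [Real.log_one, Real.sin_zero, Real.cos_zero, smul_eq_mul]
    ring
  have h2 : ∫ u in a⁻¹..(1:ℝ), (min (a*u) 1) * (1 + lam * Real.sin (Real.log (min (a*u) 1)))
      = 1 - a⁻¹ := by
    have hcongr : ∫ u in a⁻¹..(1:ℝ), (min (a*u) 1) * (1 + lam * Real.sin (Real.log (min (a*u) 1)))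
        = ∫ u in a⁻¹..(1:ℝ), (1:ℝ) := by
      apply intervalIntegral.integral_congr
      intro u hu
      rw [Set.uIcc_of_le hinv1] at hu
      have : (1:ℝ) ≤ a * u := by
        calc (1:ℝ) = a * a⁻¹ := (mul_inv_cancel₀ (ne_of_gt ha0)).symm
        _ ≤ a * u := by nlinarith [hu.1]
      simp only []
      rw [min_eq_right this]
      simp [Real.log_one]
    rw [hcongr]
    simp
  rw [h1, h2]




-- atom lemma
lemma atomzero (μ : Measure ℝ) [IsProbabilityMeasure μ] (c : ℝ) (hc : c ≠ 0) :
    ∫⁻ u in Set.Ioo (0:ℝ) 1, μ {c * u} = 0 := by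
  set T : Set (ℝ × ℝ) := {p | p.2 = c * p.1} with hTdef
  have hT : MeasurableSet T := measurableSet_eq_fun measurable_snd (measurable_const.mul measurable_fst)
  have h1 : ((volume.restrict (Set.Ioo (0:ℝ) 1)).prod μ) T
      = ∫⁻ u in Set.Ioo (0:ℝ) 1, μ {c * u} := by
    rw [Measure.prod_apply hT]
    apply lintegral_congr
    intro u
    congr 1
  have h2 : ((volume.restrict (Set.Ioo (0:ℝ) 1)).prod μ) T = 0 := by
    rw [Measure.prod_apply_symm hT]
    have : ∀ v : ℝ, (volume.restrict (Set.Ioo (0:ℝ) 1)) ((fun u => (u, v)) ⁻¹' T) = 0 := by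
      intro v
      have hpre : ((fun u : ℝ => (u, v)) ⁻¹' T) = {v / c} := by
        ext u
        simp only [hTdef, Set.mem_preimage, Set.mem_setOf_eq, Set.mem_singleton_iff]
        constructor
        · intro h; field_simp [h]; rw [h]; ring
        · intro h; rw [h]; field_simp
      rw [hpre]
      exact le_antisymm (le_trans (Measure.restrict_le_self _) (by simp)) (zero_le)
    simp [this]
  rw [← h1, h2]

lemma main_neg {Ω : Type*} [MeasurableSpace Ω] (P : Measure Ω) [IsProbabilityMeasure P]
    (lam : ℝ) (hlam : |lam| ≤ Real.sqrt 2 / 2)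
    (V U : Ω → ℝ) (hV : Measurable V) (hU : Measurable U)
    (hindep : ProbabilityTheory.IndepFun V U P)
    (hVrange : ∀ ω, V ω ∈ Set.Icc (0:ℝ) 1)
    (hVlaw : ∀ u ∈ Set.Icc (0:ℝ) 1, P {ω | V ω ≤ u} = ENNReal.ofReal (Hfun lam u))
    (hUlaw : P.map U = volume.restrict (Set.Ioo 0 1))
    (x : ℝ) (hx : x < 0) :
    P {ω | -(V ω) / U ω ≤ x} = ENNReal.ofReal
      (1 - ∫ u in (0:ℝ)..1, (min (|x| * u) 1) * (1 + lam * Real.sin (Real.log (min (|x| * u) 1)))) := by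
  have hlam1 : |lam| ≤ 1 := by
    have h2 : Real.sqrt 2 ≤ 2 := by
      nlinarith [Real.sq_sqrt (by norm_num : (2:ℝ) ≥ 0), Real.sqrt_nonneg 2]
    linarith
  set a := |x| with ha
  have ha0 : 0 < a := abs_pos.mpr (ne_of_lt hx)
  have hax : a = -x := abs_of_neg hx
  set μ := P.map V with hμ
  haveI : IsProbabilityMeasure μ := Measure.isProbabilityMeasure_map hV.aemeasurable
  -- joint law
  have hjoint : P.map (fun ω => (V ω, U ω)) = μ.prod (volume.restrict (Set.Ioo 0 1)) := by
    rw [← hUlaw]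
    exact (ProbabilityTheory.indepFun_iff_map_prod_eq_prod_map_map hV.aemeasurable hU.aemeasurable).mp hindep
  set S : Set (ℝ × ℝ) := {p | -p.1 / p.2 ≤ x} with hSdef
  have hS : MeasurableSet S := measurableSet_le (measurable_fst.neg.div measurable_snd) measurable_const
  have hev : P {ω | -(V ω) / U ω ≤ x} = (μ.prod (volume.restrict (Set.Ioo 0 1))) S := by
    rw [← hjoint, Measure.map_apply (hV.prodMk hU) hS]
    rfl
  rw [hev, Measure.prod_apply_symm hS]
  -- slices
  have hslice : ∀ u ∈ Set.Ioo (0:ℝ) 1, ((fun v => (v, u)) ⁻¹' S) = Set.Ici (a * u) := by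
    intro u hu
    ext v
    simp only [hSdef, Set.mem_preimage, Set.mem_setOf_eq, Set.mem_Ici]
    rw [div_le_iff₀ hu.1, hax]
    constructor <;> intro h <;> nlinarith
  -- measurability of Iio composite
  have hmono : Measurable fun u : ℝ => μ (Set.Iio (a * u)) := by
    have : Monotone fun u : ℝ => μ (Set.Iio (a * u)) := by
      intro s t hst
      exact measure_mono (Set.Iio_subset_Iio (by nlinarith))
    exact this.measurable
  have step1 : ∫⁻ u in Set.Ioo (0:ℝ) 1, μ ((fun v => (v, u)) ⁻¹' S)
      = ∫⁻ u in Set.Ioo (0:ℝ) 1, (1 - μ (Set.Iio (a * u))) := by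
    apply setLIntegral_congr_fun measurableSet_Ioo
    intro u hu
    dsimp only
    rw [hslice u hu, ← Set.compl_Iio, prob_compl_eq_one_sub measurableSet_Iio]
  rw [step1]
  -- pull out subtraction
  have hle : (fun u : ℝ => μ (Set.Iio (a * u))) ≤ᵐ[volume.restrict (Set.Ioo (0:ℝ) 1)] fun _ => 1 := by
    filter_upwards with u using prob_le_one
  have hfin : ∫⁻ u in Set.Ioo (0:ℝ) 1, μ (Set.Iio (a * u)) ≠ ⊤ := by
    refine ne_of_lt (lt_of_le_of_lt (lintegral_mono fun u => prob_le_one) ?_)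
    simp [lintegral_const, Measure.restrict_apply]
  have step2 : ∫⁻ u in Set.Ioo (0:ℝ) 1, (1 - μ (Set.Iio (a * u)))
      = 1 - ∫⁻ u in Set.Ioo (0:ℝ) 1, μ (Set.Iio (a * u)) := by
    rw [lintegral_sub hmono hfin hle]
    congr 1
    simp
  rw [step2]
  -- Iio to Iic via atoms
  have step3 : ∫⁻ u in Set.Ioo (0:ℝ) 1, μ (Set.Iio (a * u))
      = ∫⁻ u in Set.Ioo (0:ℝ) 1, μ (Set.Iic (a * u)) := by
    have hpt : ∀ u : ℝ, μ (Set.Iic (a * u)) = μ (Set.Iio (a * u)) + μ {a * u} := by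
      intro u
      rw [← Set.Iio_union_right, measure_union (by simp) (measurableSet_singleton _)]
    have hz := atomzero μ a (ne_of_gt ha0)
    have hadd := lintegral_add_left (μ := volume.restrict (Set.Ioo (0:ℝ) 1)) hmono (fun u => μ {a * u})
    have hc : ∫⁻ u in Set.Ioo (0:ℝ) 1, (μ (Set.Iio (a * u)) + μ {a * u})
        = ∫⁻ u in Set.Ioo (0:ℝ) 1, μ (Set.Iic (a * u)) :=
      lintegral_congr fun u => (hpt u).symm
    rw [← hc, hadd, hz, add_zero]
  rw [step3]
  -- identify μ Iic values
  have hIic : ∀ u ∈ Set.Ioo (0:ℝ) 1, μ (Set.Iic (a * u))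
      = ENNReal.ofReal ((min (a*u) 1) * (1 + lam * Real.sin (Real.log (min (a*u) 1)))) := by
    intro u hu
    have hau : 0 < a * u := mul_pos ha0 hu.1
    rw [hμ, Measure.map_apply hV measurableSet_Iic]
    rcases le_or_gt (a * u) 1 with h1 | h1
    · have := hVlaw (a * u) ⟨hau.le, h1⟩
      rw [show V ⁻¹' Set.Iic (a * u) = {ω | V ω ≤ a * u} from rfl, this]
      rw [min_eq_left h1, Hfun, if_neg (ne_of_gt hau)]
    · have huniv : V ⁻¹' Set.Iic (a * u) = Set.univ := by
        ext ω
        simp only [Set.mem_preimage, Set.mem_Iic, Set.mem_univ, iff_true]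
        exact le_trans (hVrange ω).2 h1.le
      rw [huniv, measure_univ, min_eq_right h1.le]
      simp [Real.log_one]
  have step4 : ∫⁻ u in Set.Ioo (0:ℝ) 1, μ (Set.Iic (a * u))
      = ∫⁻ u in Set.Ioo (0:ℝ) 1, ENNReal.ofReal ((min (a*u) 1) * (1 + lam * Real.sin (Real.log (min (a*u) 1)))) := by
    apply setLIntegral_congr_fun measurableSet_Ioo
    intro u hu; exact hIic u hu
  rw [step4]
  -- lintegral to integral
  have hnonneg : (0:ℝ → ℝ) ≤ᵐ[volume.restrict (Set.Ioo (0:ℝ) 1)]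
      fun u => (min (a*u) 1) * (1 + lam * Real.sin (Real.log (min (a*u) 1))) := by
    rw [Filter.EventuallyLE, ae_restrict_iff' measurableSet_Ioo]
    filter_upwards with u hu
    have h1 : 0 ≤ min (a*u) 1 := le_min (mul_pos ha0 hu.1).le zero_le_one
    have h2 : 0 ≤ 1 + lam * Real.sin (Real.log (min (a*u) 1)) := by
      have := abs_le.mp hlam1
      have hs := Real.neg_one_le_sin (Real.log (min (a*u) 1))
      have hs' := Real.sin_le_one (Real.log (min (a*u) 1))
      nlinarith
    positivity
  have hint : IntegrableOn (fun u => (min (a*u) 1) * (1 + lam * Real.sin (Real.log (min (a*u) 1))))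
      (Set.Ioo (0:ℝ) 1) volume :=
    ((contMin lam a).continuousOn.integrableOn_Icc).mono_set Set.Ioo_subset_Icc_self
  have step5 : ∫⁻ u in Set.Ioo (0:ℝ) 1, ENNReal.ofReal ((min (a*u) 1) * (1 + lam * Real.sin (Real.log (min (a*u) 1))))
      = ENNReal.ofReal (∫ u in Set.Ioo (0:ℝ) 1, (min (a*u) 1) * (1 + lam * Real.sin (Real.log (min (a*u) 1)))) :=
    (ofReal_integral_eq_lintegral_ofReal hint hnonneg).symm
  rw [step5]
  -- Ioo integral = interval integral
  have step6 : ∫ u in Set.Ioo (0:ℝ) 1, (min (a*u) 1) * (1 + lam * Real.sin (Real.log (min (a*u) 1)))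
      = ∫ u in (0:ℝ)..1, (min (a*u) 1) * (1 + lam * Real.sin (Real.log (min (a*u) 1))) := by
    rw [intervalIntegral.integral_of_le (by norm_num : (0:ℝ) ≤ 1), integral_Ioc_eq_integral_Ioo]
  rw [step6]
  -- final ENNReal arithmetic
  have hInonneg : 0 ≤ ∫ u in (0:ℝ)..1, (min (a*u) 1) * (1 + lam * Real.sin (Real.log (min (a*u) 1))) := by
    rw [← step6]
    apply integral_nonneg_of_ae hnonneg
  rw [ENNReal.ofReal_sub 1 hInonneg, ENNReal.ofReal_one]


theorem stmt7 {Ω : Type*} [MeasurableSpace Ω] (P : Measure Ω) [IsProbabilityMeasure P]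
    (lam : ℝ) (hlam : |lam| ≤ Real.sqrt 2 / 2)
    (V U : Ω → ℝ) (hV : Measurable V) (hU : Measurable U)
    (hindep : ProbabilityTheory.IndepFun V U P)
    (hVrange : ∀ ω, V ω ∈ Set.Icc (0:ℝ) 1)
    (hVlaw : ∀ u ∈ Set.Icc (0:ℝ) 1, P {ω | V ω ≤ u} = ENNReal.ofReal (Hfun lam u))
    (hUlaw : P.map U = volume.restrict (Set.Ioo 0 1)) :
    (∀ x : ℝ, x ≤ -1 →
      P {ω | -(V ω) / U ω ≤ x} = ENNReal.ofReal (|x|⁻¹ * (1/2 + lam/5))) ∧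
    (∀ x : ℝ, -1 < x → x < 0 →
      P {ω | -(V ω) / U ω ≤ x} = ENNReal.ofReal
        (1 - |x| * (1/2 + (lam/5) * (2 * Real.sin (Real.log |x|)
          - Real.cos (Real.log |x|))))) := by
  constructor
  · intro x hx1
    have hx : x < 0 := lt_of_le_of_lt hx1 (by norm_num)
    have ha1 : (1:ℝ) ≤ |x| := by
      rw [abs_of_neg hx]; linarith
    rw [main_neg P lam hlam V U hV hU hindep hVrange hVlaw hUlaw x hx,
      intCaseBig lam |x| ha1]
    congr 1
    have hne : |x| ≠ 0 := by intro h; rw [h] at ha1; linarith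
    field_simp
    ring
  · intro x hx1 hx
    have ha0 : 0 < |x| := abs_pos.mpr (ne_of_lt hx)
    have ha1 : |x| ≤ 1 := by
      rw [abs_of_neg hx]; linarith
    rw [main_neg P lam hlam V U hV hU hindep hVrange hVlaw hUlaw x hx,
      intCaseSmall lam |x| ha0 ha1]
    congr 1
    ring
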